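/- arXiv:1308.5884 — 2 statements merged into one kernel-verified Lean document; each statement's English description precedes it below -/
import Mathlib

section
/- For positive semidefinite operators ρ, σ on a finite-dimensional Hilbert space with supp(ρ) ⊆ supp(σ), the max-relative entropy D_max(ρ‖σ) := min{λ : ρ ≤ 2^λ σ} equals log‖σ^{-1/2} ρ σ^{-1/2}‖_∞, where σ^{-1/2} is the square root of the generalized inverse of σ. -/
open scoped ComplexOrder Kronecker
open Matrix Classical
open scoped Matrix.Norms.L2Operator

noncomputable def msqrt {n : Type*} [Fintype n] [DecidableEq n] (A : Matrix n n ℂ) :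
    Matrix n n ℂ :=
  if h : A.PosSemidef then
    (h.1.eigenvectorUnitary : Matrix n n ℂ) * diagonal ((↑) ∘ (√·) ∘ h.1.eigenvalues) *
      (star h.1.eigenvectorUnitary : Matrix n n ℂ)
  else 0

noncomputable def traceNorm {n : Type*} [Fintype n] [DecidableEq n] (A : Matrix n n ℂ) : ℝ :=
  (msqrt (Aᴴ * A)).trace.re

noncomputable def fid {n : Type*} [Fintype n] [DecidableEq n] (ρ σ : Matrix n n ℂ) : ℝ :=
  traceNorm (msqrt ρ * msqrt σ) + Real.sqrt ((1 - ρ.trace.re) * (1 - σ.trace.re))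

noncomputable def pdist {n : Type*} [Fintype n] [DecidableEq n] (ρ σ : Matrix n n ℂ) : ℝ :=
  Real.sqrt (1 - (fid ρ σ) ^ 2)

/-- Loewner order: `A ≤ B` iff `B - A` is positive semidefinite. -/
def loewnerLE {n : Type*} [Fintype n] (A B : Matrix n n ℂ) : Prop := (B - A).PosSemidef

/-- Max-relative entropy `D_max(ρ‖σ) = min {λ : ρ ≤ 2^λ σ}`. -/
noncomputable def Dmax {n : Type*} [Fintype n] (ρ σ : Matrix n n ℂ) : ℝ :=
  sInf {l : ℝ | loewnerLE ρ (((2 : ℝ) ^ l) • σ)}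

def Subnormalized {n : Type*} [Fintype n] (ρ : Matrix n n ℂ) : Prop :=
  ρ.PosSemidef ∧ 0 < ρ.trace.re ∧ ρ.trace.re ≤ 1

def IsDensity {n : Type*} [Fintype n] (ρ : Matrix n n ℂ) : Prop :=
  ρ.PosSemidef ∧ ρ.trace = 1

/-- Operator norm (largest singular value). -/
noncomputable def opNorm {n : Type*} [Fintype n] [DecidableEq n] (A : Matrix n n ℂ) : ℝ :=
  ‖Matrix.toEuclideanCLM (𝕜 := ℂ) A‖

/-- Square root of the Moore–Penrose pseudoinverse of a Hermitian matrix. -/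
noncomputable def pinvSqrt {n : Type*} [Fintype n] [DecidableEq n] (A : Matrix n n ℂ) :
    Matrix n n ℂ :=
  if h : A.IsHermitian then
    (h.eigenvectorUnitary : Matrix n n ℂ) *
      Matrix.diagonal (fun i => ((Real.sqrt (h.eigenvalues i))⁻¹ : ℂ)) *
      (star h.eigenvectorUnitary : Matrix n n ℂ)
  else 0

/-- Support (range) of a matrix. -/
noncomputable def msupp {n : Type*} [Fintype n] (A : Matrix n n ℂ) : Submodule ℂ (n → ℂ) :=
  LinearMap.range A.mulVecLin

section Helpers

variable {n : Type*} [Fintype n] [DecidableEq n]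

omit [DecidableEq n] in
lemma dot_eq_inner (v w : n → ℂ) :
    star v ⬝ᵥ w = (inner ℂ ((WithLp.equiv 2 (n → ℂ)).symm v) ((WithLp.equiv 2 (n → ℂ)).symm w) : ℂ) := by
  rw [dotProduct_comm]; exact (EuclideanSpace.inner_toLp_toLp v w).symm

lemma toEuclideanCLM_piLp_equiv_symm (A : Matrix n n ℂ) (x : n → ℂ) :
    toEuclideanCLM (𝕜 := ℂ) A ((WithLp.equiv 2 (n → ℂ)).symm x)
      = (WithLp.equiv 2 (n → ℂ)).symm (toLin' A x) := rfl

omit [DecidableEq n] in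
lemma dot_self_re (v : n → ℂ) :
    (star v ⬝ᵥ v).re = ‖(WithLp.equiv 2 (n → ℂ)).symm v‖ ^ 2 := by
  rw [dot_eq_inner, inner_self_eq_norm_sq_to_K]
  norm_cast

omit [DecidableEq n] in
lemma dot_self_im (v : n → ℂ) : (star v ⬝ᵥ v).im = 0 := by
  rw [dot_eq_inner, inner_self_eq_norm_sq_to_K]
  norm_cast

open scoped MatrixOrder in
lemma psd_sub_smul_one_iff {M : Matrix n n ℂ} (hM : M.PosSemidef) {c : ℝ} (hc : 0 ≤ c) :
    ((c : ℂ) • (1 : Matrix n n ℂ) - M).PosSemidef ↔ ‖M‖ ≤ c := by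
  constructor
  · intro h
    set T := CFC.sqrt M with hTdef
    have hT : T.PosSemidef := (CFC.sqrt_nonneg M).posSemidef
    have hTT : Tᴴ * T = M := by rw [hT.1, CFC.sqrt_mul_sqrt_self M hM.nonneg]
    have key : ∀ x : EuclideanSpace ℂ n, ‖toEuclideanCLM (𝕜 := ℂ) T x‖ ≤ Real.sqrt c * ‖x‖ := by
      intro x
      set v : n → ℂ := WithLp.equiv 2 (n → ℂ) x with hv
      have hx : x = (WithLp.equiv 2 (n → ℂ)).symm v := rfl
      have h1 : (inner ℂ (toEuclideanCLM (𝕜 := ℂ) T x) (toEuclideanCLM (𝕜 := ℂ) T x) : ℂ)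
          = star v ⬝ᵥ (M *ᵥ v) := by
        rw [hx, toEuclideanCLM_piLp_equiv_symm, ← dot_eq_inner, toLin'_apply, star_mulVec,
          ← dotProduct_mulVec, mulVec_mulVec, hTT]
      have h1' : (star v ⬝ᵥ (M *ᵥ v)).re = ‖toEuclideanCLM (𝕜 := ℂ) T x‖ ^ 2 := by
        rw [← h1, inner_self_eq_norm_sq_to_K]
        norm_cast
      have h2 := h.dotProduct_mulVec_nonneg v
      rw [sub_mulVec, dotProduct_sub, smul_mulVec, one_mulVec, Complex.le_def] at h2
      simp only [Complex.zero_re, Complex.zero_im, Complex.sub_re, Complex.sub_im,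
        dotProduct_smul, smul_eq_mul, Complex.mul_re, Complex.mul_im, Complex.ofReal_re,
        Complex.ofReal_im, dot_self_re, dot_self_im, h1'] at h2
      have h5 : ‖toEuclideanCLM (𝕜 := ℂ) T x‖ ^ 2 ≤ c * ‖x‖ ^ 2 := by
        have := h2.1
        rw [← hx] at this
        linarith
      calc ‖toEuclideanCLM (𝕜 := ℂ) T x‖ = Real.sqrt (‖toEuclideanCLM (𝕜 := ℂ) T x‖ ^ 2) := by
            rw [Real.sqrt_sq (norm_nonneg _)]
        _ ≤ Real.sqrt (c * ‖x‖ ^ 2) := Real.sqrt_le_sqrt h5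
        _ = Real.sqrt c * ‖x‖ := by
            rw [Real.sqrt_mul hc, Real.sqrt_sq (norm_nonneg _)]
    have hTn : ‖T‖ ≤ Real.sqrt c := by
      rw [Matrix.cstar_norm_def]
      exact ContinuousLinearMap.opNorm_le_bound _ (Real.sqrt_nonneg c) key
    calc ‖M‖ = ‖Tᴴ * T‖ := by rw [hTT]
      _ = ‖T‖ * ‖T‖ := Matrix.l2_opNorm_conjTranspose_mul_self T
      _ ≤ Real.sqrt c * Real.sqrt c :=
          mul_le_mul hTn hTn (norm_nonneg _) (Real.sqrt_nonneg c)
      _ = c := Real.mul_self_sqrt hc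
  · intro h
    refine PosSemidef.of_dotProduct_mulVec_nonneg ?_ ?_
    · show ((c:ℂ) • 1 - M)ᴴ = _
      rw [conjTranspose_sub, conjTranspose_smul, conjTranspose_one, hM.1, Complex.star_def,
        Complex.conj_ofReal]
    · intro v
      have h0 := hM.dotProduct_mulVec_nonneg v
      rw [Complex.le_def] at h0
      have hre : (star v ⬝ᵥ (M *ᵥ v)).re ≤ c * ‖(WithLp.equiv 2 (n → ℂ)).symm v‖ ^ 2 := by
        have h1 : star v ⬝ᵥ (M *ᵥ v) = (inner ℂ ((WithLp.equiv 2 (n → ℂ)).symm v)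
            (toEuclideanCLM (𝕜 := ℂ) M ((WithLp.equiv 2 (n → ℂ)).symm v)) : ℂ) := by
          rw [toEuclideanCLM_piLp_equiv_symm, ← dot_eq_inner, toLin'_apply]
        calc (star v ⬝ᵥ (M *ᵥ v)).re ≤ ‖star v ⬝ᵥ (M *ᵥ v)‖ := Complex.re_le_norm _
          _ = ‖(inner ℂ ((WithLp.equiv 2 (n → ℂ)).symm v)
              (toEuclideanCLM (𝕜 := ℂ) M ((WithLp.equiv 2 (n → ℂ)).symm v)) : ℂ)‖ := by rw [h1]
          _ ≤ ‖(WithLp.equiv 2 (n → ℂ)).symm v‖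
              * ‖toEuclideanCLM (𝕜 := ℂ) M ((WithLp.equiv 2 (n → ℂ)).symm v)‖ :=
            norm_inner_le_norm _ _
          _ ≤ ‖(WithLp.equiv 2 (n → ℂ)).symm v‖
              * (‖toEuclideanCLM (𝕜 := ℂ) M‖ * ‖(WithLp.equiv 2 (n → ℂ)).symm v‖) :=
            mul_le_mul_of_nonneg_left (ContinuousLinearMap.le_opNorm _ _) (norm_nonneg _)
          _ = ‖M‖ * ‖(WithLp.equiv 2 (n → ℂ)).symm v‖ ^ 2 := by
              rw [← Matrix.cstar_norm_def]; ring
          _ ≤ c * ‖(WithLp.equiv 2 (n → ℂ)).symm v‖ ^ 2 :=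
            mul_le_mul_of_nonneg_right h (sq_nonneg _)
      rw [sub_mulVec, dotProduct_sub, smul_mulVec, one_mulVec, Complex.le_def]
      constructor
      · simp only [Complex.zero_re, Complex.sub_re, dotProduct_smul, smul_eq_mul,
          Complex.mul_re, Complex.ofReal_re, Complex.ofReal_im, dot_self_re, dot_self_im]
        linarith
      · simp only [Complex.zero_im, Complex.sub_im, dotProduct_smul, smul_eq_mul,
          Complex.mul_im, Complex.ofReal_re, Complex.ofReal_im, dot_self_re, dot_self_im,
          ← h0.2]
        ring



lemma diag_real_herm (f : n → ℝ) : (diagonal (fun i => (f i : ℂ))).IsHermitian := by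
  rw [Matrix.IsHermitian, diagonal_conjTranspose]
  have h : (star fun i => ((f i : ℂ))) = fun i => ((f i : ℂ)) := by
    funext i
    simp [Pi.star_apply, Complex.star_def, Complex.conj_ofReal]
  rw [h]

lemma conjmul (U : Matrix.unitaryGroup n ℂ) (f g : n → ℂ) :
    ((U : Matrix n n ℂ) * diagonal f * star (U : Matrix n n ℂ))
      * ((U : Matrix n n ℂ) * diagonal g * star (U : Matrix n n ℂ))
      = (U : Matrix n n ℂ) * diagonal (f * g) * star (U : Matrix n n ℂ) := by
  have h : star (U : Matrix n n ℂ) * (U : Matrix n n ℂ) = 1 := Matrix.UnitaryGroup.star_mul_self U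
  simp only [Matrix.mul_assoc]
  rw [← Matrix.mul_assoc (star (U : Matrix n n ℂ)) (U : Matrix n n ℂ), h, Matrix.one_mul,
    ← Matrix.mul_assoc (diagonal f), diagonal_mul_diagonal]
  rfl

lemma conj_herm (U : Matrix.unitaryGroup n ℂ) (f : n → ℝ) :
    ((U : Matrix n n ℂ) * diagonal (fun i => (f i : ℂ)) * star (U : Matrix n n ℂ)).IsHermitian := by
  have h := isHermitian_mul_mul_conjTranspose (U : Matrix n n ℂ) (diag_real_herm f)
  rwa [← Matrix.star_eq_conjTranspose] at h

lemma conj_psd (U : Matrix.unitaryGroup n ℂ) (f : n → ℝ) (hf : ∀ i, 0 ≤ f i) :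
    ((U : Matrix n n ℂ) * diagonal (fun i => (f i : ℂ)) * star (U : Matrix n n ℂ)).PosSemidef := by
  have hD : (diagonal (fun i => (f i : ℂ))).PosSemidef := by
    rw [posSemidef_diagonal_iff]
    intro i
    exact_mod_cast hf i
  have := hD.mul_mul_conjTranspose_same (U : Matrix n n ℂ)
  rwa [← Matrix.star_eq_conjTranspose] at this


lemma key {ρ σ : Matrix n n ℂ} (hρ : ρ.PosSemidef) (hσ : σ.PosSemidef)
    (hsupp : msupp ρ ≤ msupp σ) {c : ℝ} (hc : 0 < c) :
    loewnerLE ρ (c • σ) ↔ ‖pinvSqrt σ * ρ * pinvSqrt σ‖ ≤ c := by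
  have hH : σ.IsHermitian := hσ.1
  set U := hH.eigenvectorUnitary with hU
  set d := hH.eigenvalues with hdd
  have hd : ∀ i, 0 ≤ d i := hσ.eigenvalues_nonneg
  set e : n → ℂ := fun i => ((Real.sqrt (d i))⁻¹ : ℂ) with he
  set p : n → ℂ := fun i => if d i = 0 then (0 : ℂ) else 1 with hp
  set r : n → ℂ := fun i => ((Real.sqrt (d i) : ℝ) : ℂ) with hr
  set dd : n → ℂ := fun i => ((d i : ℝ) : ℂ) with hddc
  set S : Matrix n n ℂ := (U : Matrix n n ℂ) * diagonal e * star (U : Matrix n n ℂ) with hS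
  set P : Matrix n n ℂ := (U : Matrix n n ℂ) * diagonal p * star (U : Matrix n n ℂ) with hP
  set R : Matrix n n ℂ := (U : Matrix n n ℂ) * diagonal r * star (U : Matrix n n ℂ) with hR
  have hσeq : σ = (U : Matrix n n ℂ) * diagonal dd * star (U : Matrix n n ℂ) := by
    have := hH.spectral_theorem
    rw [Unitary.conjStarAlgAut_apply] at this
    exact this
  have hpinv : pinvSqrt σ = S := by
    rw [pinvSqrt, dif_pos hH]
  -- entrywise identities
  have hsq : ∀ i, d i ≠ 0 → Real.sqrt (d i) ≠ 0 := fun i hdi =>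
    Real.sqrt_ne_zero'.mpr ((hd i).lt_of_ne (Ne.symm hdi))
  have hede : e * dd * e = p := by
    funext i
    by_cases hdi : d i = 0
    · simp [he, hp, hddc, hdi]
    · simp only [Pi.mul_apply, he, hp, hddc, if_neg hdi]
      have : (Real.sqrt (d i))⁻¹ * (d i) * (Real.sqrt (d i))⁻¹ = 1 := by
        rw [show (Real.sqrt (d i))⁻¹ * (d i) * (Real.sqrt (d i))⁻¹
            = d i / (Real.sqrt (d i) * Real.sqrt (d i)) by ring,
          Real.mul_self_sqrt (hd i), div_self hdi]
      exact_mod_cast this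
  have hrpr : r * p * r = dd := by
    funext i
    by_cases hdi : d i = 0
    · simp [hr, hp, hddc, hdi]
    · simp only [Pi.mul_apply, hr, hp, hddc, if_neg hdi, mul_one]
      exact_mod_cast Real.mul_self_sqrt (hd i)
  have hre : r * e = p := by
    funext i
    by_cases hdi : d i = 0
    · simp [hr, he, hp, hdi]
    · simp only [Pi.mul_apply, hr, he, hp, if_neg hdi]
      exact_mod_cast mul_inv_cancel₀ (hsq i hdi)
  have her : e * r = p := by
    funext i
    by_cases hdi : d i = 0
    · simp [hr, he, hp, hdi]
    · simp only [Pi.mul_apply, hr, he, hp, if_neg hdi]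
      exact_mod_cast inv_mul_cancel₀ (hsq i hdi)
  have hep : e * p = e := by
    funext i
    by_cases hdi : d i = 0
    · simp [he, hp, hdi, Real.sqrt_zero]
    · simp [he, hp, hdi]
  have hpe : p * e = e := by
    funext i
    by_cases hdi : d i = 0
    · simp [he, hp, hdi, Real.sqrt_zero]
    · simp [he, hp, hdi]
  have hpp : p * p = p := by
    funext i
    by_cases hdi : d i = 0 <;> simp [hp, hdi]
  have hpdd : p * dd = dd := by
    funext i
    by_cases hdi : d i = 0 <;> simp [hp, hddc, hdi]
  -- matrix identities
  have hecast : e = fun i => (((Real.sqrt (d i))⁻¹ : ℝ) : ℂ) := by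
    funext i; push_cast; rfl
  have hpcast : p = fun i => (((if d i = 0 then (0:ℝ) else 1) : ℝ) : ℂ) := by
    funext i; by_cases hdi : d i = 0 <;> simp [hp, hdi]
  have hSh : S.IsHermitian := by
    rw [hS, hecast]; exact conj_herm U _
  have hPh : P.IsHermitian := by
    rw [hP, hpcast]; exact conj_herm U _
  have hRh : R.IsHermitian := by
    rw [hR]; exact conj_herm U _
  have hSσS : S * σ * S = P := by
    rw [hS, hσeq, hP, conjmul, conjmul, hede]
  have hRS : R * S = P := by rw [hR, hS, hP, conjmul, hre]
  have hSR : S * R = P := by rw [hS, hR, hP, conjmul, her]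
  have hPS : P * S = S := by rw [hP, hS, conjmul, hpe]
  have hSP : S * P = S := by rw [hS, hP, conjmul, hep]
  have hPP : P * P = P := by rw [hP, conjmul, hpp]
  have hPσ : P * σ = σ := by rw [hP, hσeq, conjmul, hpdd]
  have hRPR : R * P * R = σ := by
    rw [hR, hP, hσeq, conjmul, conjmul, hrpr]
  -- support argument
  have hPρ : P * ρ = ρ := by
    have hcol : ∀ x, P *ᵥ (ρ *ᵥ x) = ρ *ᵥ x := by
      intro x
      have hx : ρ *ᵥ x ∈ msupp σ := hsupp ⟨x, by simp [mulVecLin_apply]⟩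
      obtain ⟨y, hy⟩ := hx
      rw [mulVecLin_apply] at hy
      rw [← hy, mulVec_mulVec, hPσ]
    ext i j
    have h := congrFun (hcol (Pi.single j 1)) i
    rw [mulVec_mulVec] at h
    simpa [mulVec_single] using h
  have hρP : ρ * P = ρ := by
    have := congrArg conjTranspose hPρ
    rwa [conjTranspose_mul, hρ.1, hPh] at this
  -- M
  set M : Matrix n n ℂ := S * ρ * S with hM
  have hMpinv : pinvSqrt σ * ρ * pinvSqrt σ = M := by rw [hpinv, hM]
  have hMpsd : M.PosSemidef := by
    have := hρ.conjTranspose_mul_mul_same S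
    rwa [hSh, ← hM] at this
  have hSρS : M = S * ρ * S := hM
  have hPM : P * M = M := by
    rw [hM, ← Matrix.mul_assoc P (S * ρ) S, ← Matrix.mul_assoc P S ρ, hPS]
  have hMP : M * P = M := by rw [hM, Matrix.mul_assoc (S * ρ) S P, hSP]
  have hRMR : R * M * R = ρ := by
    rw [hM]
    calc R * (S * ρ * S) * R = (R * S) * ρ * (S * R) := by
          simp only [Matrix.mul_assoc]
      _ = P * ρ * P := by rw [hRS, hSR]
      _ = ρ := by rw [hPρ, hρP]
  -- equivalence chain
  have hcsmul : (c : ℝ) • σ = (c : ℂ) • σ := by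
    ext i j; simp [Complex.real_smul]
  have E2 : ((c : ℂ) • σ - ρ).PosSemidef ↔ ((c : ℂ) • P - M).PosSemidef := by
    constructor
    · intro h
      have h2 := h.conjTranspose_mul_mul_same S
      rw [hSh, Matrix.mul_sub, Matrix.sub_mul, Matrix.mul_smul, Matrix.smul_mul,
        hSσS] at h2
      rwa [hM]
    · intro h
      have h2 := h.conjTranspose_mul_mul_same R
      rw [hRh, Matrix.mul_sub, Matrix.sub_mul, Matrix.mul_smul, Matrix.smul_mul,
        hRPR] at h2
      rwa [← hRMR, hM]
  have E3 : ((c : ℂ) • P - M).PosSemidef ↔ ((c : ℂ) • 1 - M).PosSemidef := by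
    constructor
    · intro h
      have hU1 : (1 : Matrix n n ℂ)
          = (U : Matrix n n ℂ) * diagonal (fun _ => (1:ℂ)) * star (U : Matrix n n ℂ) := by
        rw [diagonal_one, Matrix.mul_one, Matrix.mem_unitaryGroup_iff.mp U.2]
      have hcP : ((c : ℂ) • ((1 : Matrix n n ℂ) - P)).PosSemidef := by
        have h1mP : (1 : Matrix n n ℂ) - P
            = (U : Matrix n n ℂ) * diagonal (fun i => (1 : ℂ) - p i)
              * star (U : Matrix n n ℂ) := by
          rw [hU1, hP, ← Matrix.sub_mul, ← Matrix.mul_sub, diagonal_sub]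
        have hform : (c : ℂ) • ((1 : Matrix n n ℂ) - P)
            = (U : Matrix n n ℂ)
              * diagonal (fun i => ((c * (if d i = 0 then (1:ℝ) else 0) : ℝ) : ℂ))
              * star (U : Matrix n n ℂ) := by
          rw [h1mP]
          have hmove : (c : ℂ) • ((U : Matrix n n ℂ) * diagonal (fun i => (1 : ℂ) - p i)
                * star (U : Matrix n n ℂ))
              = (U : Matrix n n ℂ) * ((c : ℂ) • diagonal (fun i => (1 : ℂ) - p i))
                * star (U : Matrix n n ℂ) := by
            rw [Matrix.mul_smul, Matrix.smul_mul]
          rw [hmove]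
          congr 2
          ext i j
          by_cases hij : i = j
          · subst hij
            by_cases hdi : d i = 0 <;>
              simp [hp, hdi, Matrix.smul_apply, Matrix.diagonal_apply_eq, smul_eq_mul]
          · simp [Matrix.smul_apply, Matrix.diagonal_apply_ne _ hij]
        rw [hform]
        refine conj_psd U _ (fun i => ?_)
        by_cases hdi : d i = 0 <;> simp [hdi, hc.le]
      have hsum : (c : ℂ) • (1 : Matrix n n ℂ) - M
          = ((c : ℂ) • P - M) + (c : ℂ) • ((1 : Matrix n n ℂ) - P) := by
        rw [smul_sub]; abel
      rw [hsum]
      exact h.add hcP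
    · intro h
      have h2 := h.conjTranspose_mul_mul_same P
      rwa [hPh, Matrix.mul_sub, Matrix.sub_mul, Matrix.mul_smul, Matrix.smul_mul,
        Matrix.mul_one, hPP, hPM, hMP] at h2
  have E4 : ((c : ℂ) • 1 - M).PosSemidef ↔ ‖M‖ ≤ c := psd_sub_smul_one_iff hMpsd hc.le
  rw [hMpinv, loewnerLE, hcsmul, ← E4, ← E3, ← E2]
end Helpers

theorem stmt1 {n : Type*} [Fintype n] [DecidableEq n] (ρ σ : Matrix n n ℂ)
    (hρ : ρ.PosSemidef) (hσ : σ.PosSemidef) (hsupp : msupp ρ ≤ msupp σ) :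
    Dmax ρ σ = Real.logb 2 (opNorm (pinvSqrt σ * ρ * pinvSqrt σ)) := by
  have hkey : ∀ l : ℝ, loewnerLE ρ (((2 : ℝ) ^ l) • σ)
      ↔ ‖pinvSqrt σ * ρ * pinvSqrt σ‖ ≤ (2 : ℝ) ^ l :=
    fun l => key hρ hσ hsupp (Real.rpow_pos_of_pos two_pos l)
  have hopn : opNorm (pinvSqrt σ * ρ * pinvSqrt σ) = ‖pinvSqrt σ * ρ * pinvSqrt σ‖ := rfl
  rcases eq_or_lt_of_le (norm_nonneg (pinvSqrt σ * ρ * pinvSqrt σ)) with h0 | h0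
  · rw [Dmax, hopn, ← h0, Real.logb_zero]
    have hset : {l : ℝ | loewnerLE ρ (((2 : ℝ) ^ l) • σ)} = Set.univ := by
      ext l
      simp only [Set.mem_setOf_eq, Set.mem_univ, iff_true]
      exact (hkey l).mpr (by rw [← h0]; exact (Real.rpow_pos_of_pos two_pos l).le)
    rw [hset]
    exact Real.sInf_of_not_bddBelow not_bddBelow_univ
  · rw [Dmax, hopn]
    have hset : {l : ℝ | loewnerLE ρ (((2 : ℝ) ^ l) • σ)}
        = Set.Ici (Real.logb 2 ‖pinvSqrt σ * ρ * pinvSqrt σ‖) := by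
      ext l
      simp only [Set.mem_setOf_eq, Set.mem_Ici]
      rw [hkey l]
      exact (Real.logb_le_iff_le_rpow one_lt_two h0).symm
    rw [hset, csInf_Ici]
end

section
/- Rescaling toward normalization cannot increase purified distance to a normalized state: if ρ is a normalized state (tr ρ = 1), ρ' is subnormalized with P(ρ, ρ') ≤ ε, then the normalized state ρ'/tr(ρ') also satisfies P(ρ, ρ'/tr(ρ')) ≤ ε. -/
open scoped ComplexOrder Kronecker
open Matrix Classical

section aux

variable {n : Type*} [Fintype n] [DecidableEq n]

lemma psd_smul (c : ℝ) (hc : 0 ≤ c) {A : Matrix n n ℂ} (hA : A.PosSemidef) :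
    ((c : ℂ) • A).PosSemidef := by
  refine ⟨?_, fun x => ?_⟩
  · unfold Matrix.IsHermitian
    rw [conjTranspose_smul, hA.1.eq]
    congr 1
    simp
  · exact (hA.smul (by exact_mod_cast hc : (0 : ℂ) ≤ (c : ℂ))).2 x

lemma msqrt_psd (A : Matrix n n ℂ) : (msqrt A).PosSemidef := by
  unfold msqrt
  split
  · rename_i h
    have hd := (PosSemidef.diagonal (d := fun i => ((√(h.1.eigenvalues i) : ℝ) : ℂ))
      (fun i => show (0 : ℂ) ≤ ((√(h.1.eigenvalues i) : ℝ) : ℂ) from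
        Complex.zero_le_real.mpr (Real.sqrt_nonneg _))).mul_mul_conjTranspose_same
      (h.1.eigenvectorUnitary : Matrix n n ℂ)
    rwa [← star_eq_conjTranspose] at hd
  · exact Matrix.PosSemidef.zero

lemma msqrt_smul (c : ℝ) (hc : 0 ≤ c) {A : Matrix n n ℂ} (hA : A.PosSemidef) :
    msqrt ((c : ℂ) • A) = (Real.sqrt c : ℂ) • msqrt A := by
  have hA' := psd_smul c hc hA
  have key : ∀ {B : Matrix n n ℂ} (hB : B.PosSemidef), msqrt B = cfc Real.sqrt B := by
    intro B hB
    rw [msqrt, dif_pos hB, hB.1.cfc_eq]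
    rfl
  have hAsa : IsSelfAdjoint A := hA.1
  rw [key hA', key hA, Complex.coe_smul, Complex.coe_smul, ← cfc_comp_smul c Real.sqrt A]
  rw [← cfc_smul (Real.sqrt c) Real.sqrt A]
  congr 1
  funext x
  simp [smul_eq_mul, Real.sqrt_mul hc]

lemma psd_trace_re_nonneg {A : Matrix n n ℂ} (hA : A.PosSemidef) : 0 ≤ A.trace.re := by
  rw [Matrix.trace, Complex.re_sum]
  apply Finset.sum_nonneg
  intro i _
  have h := hA.dotProduct_mulVec_nonneg (Pi.single i 1)
  have heq : star (Pi.single i 1 : n → ℂ) ⬝ᵥ A *ᵥ Pi.single i 1 = A i i := by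
    simp [mulVec_single, dotProduct, Pi.single_apply, star_eq_iff_star_eq]
  rw [heq] at h
  exact Complex.le_def.mp h |>.1

lemma traceNorm_nonneg (A : Matrix n n ℂ) : 0 ≤ traceNorm A :=
  psd_trace_re_nonneg (msqrt_psd _)

lemma traceNorm_smul (c : ℝ) (hc : 0 ≤ c) (A : Matrix n n ℂ) :
    traceNorm ((c : ℂ) • A) = c * traceNorm A := by
  unfold traceNorm
  have h1 : ((c : ℂ) • A)ᴴ * ((c : ℂ) • A) = ((c ^ 2 : ℝ) : ℂ) • (Aᴴ * A) := by
    rw [conjTranspose_smul, smul_mul_assoc, mul_smul_comm, smul_smul]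
    rw [Complex.star_def, Complex.conj_ofReal]
    push_cast
    ring_nf
  rw [h1, msqrt_smul (c ^ 2) (sq_nonneg c) (posSemidef_conjTranspose_mul_self A),
    trace_smul, Real.sqrt_sq hc, smul_eq_mul, Complex.mul_re, Complex.ofReal_re,
    Complex.ofReal_im]
  ring

end aux

theorem stmt9 {n : Type*} [Fintype n] [DecidableEq n] (ρ ρ' : Matrix n n ℂ)
    (hρ : IsDensity ρ) (hρ' : Subnormalized ρ') (ε : ℝ) (h : pdist ρ ρ' ≤ ε) :
    pdist ρ ((ρ'.trace.re)⁻¹ • ρ') ≤ ε := by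
  obtain ⟨hρpsd, hρtr⟩ := hρ
  obtain ⟨hpsd, ht0, ht1⟩ := hρ'
  set t := ρ'.trace.re with htdef
  have hρre : ρ.trace.re = 1 := by rw [hρtr]; simp
  have hsm : (t⁻¹ : ℝ) • ρ' = ((t⁻¹ : ℝ) : ℂ) • ρ' := by
    ext i j; simp [Complex.real_smul]
  have hinv0 : (0 : ℝ) ≤ t⁻¹ := by positivity
  have hfid2 : fid ρ ((t⁻¹ : ℝ) • ρ')
      = Real.sqrt t⁻¹ * traceNorm (msqrt ρ * msqrt ρ') := by
    rw [fid, hsm, msqrt_smul _ hinv0 hpsd, mul_smul_comm,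
      traceNorm_smul _ (Real.sqrt_nonneg _), hρre]
    simp
  have hfid1 : fid ρ ρ' = traceNorm (msqrt ρ * msqrt ρ') := by
    rw [fid, hρre]; simp
  have hF0 := traceNorm_nonneg (msqrt ρ * msqrt ρ')
  have h1 : (1 : ℝ) ≤ Real.sqrt t⁻¹ := by
    rw [show (1 : ℝ) = Real.sqrt 1 by simp]
    exact Real.sqrt_le_sqrt (one_le_inv_iff₀.mpr ⟨ht0, ht1⟩)
  have hle : fid ρ ρ' ≤ fid ρ ((t⁻¹ : ℝ) • ρ') := by
    rw [hfid1, hfid2]; nlinarith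
  have hfo : 0 ≤ fid ρ ρ' := hfid1 ▸ hF0
  calc pdist ρ ((t⁻¹ : ℝ) • ρ') ≤ pdist ρ ρ' :=
        Real.sqrt_le_sqrt (by nlinarith)
    _ ≤ ε := h
end
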